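/- Let k ≥ n ≥ 1, let ψ_1,…,ψ_k be vectors in ℂ^n, and let p_1,…,p_k be strictly positive reals. Let ρ = ∑_i p_i ψ_i ψ_i^† be the n×n density matrix, with real eigenvalues x_1,…,x_n, and let A be the k×k matrix with entries a_{ij} = ⟨ψ_i, ψ_j⟩. Then for every i with 1 ≤ i ≤ n, the i-th elementary symmetric polynomial of the eigenvalues satisfies e_i(x_1,…,x_n) = ∑_{u_1<…<u_i} p_{u_1}⋯p_{u_i} · det A_{u_1,…,u_i}, where A_{u_1,…,u_i} is the i×i principal submatrix of A obtained by keeping only the rows and columns with labels in {u_1,…,u_i}. -/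

import Mathlib

/-- The `i`-th elementary symmetric polynomial of `x : Fin n → ℝ`. -/
noncomputable def esymm (n i : ℕ) (x : Fin n → ℝ) : ℝ :=
  ∑ s ∈ Finset.powersetCard i (Finset.univ : Finset (Fin n)), ∏ u ∈ s, x u

open Polynomial Matrix Finset

lemma det_piecewise_one {k : ℕ} (M : Matrix (Fin k) (Fin k) ℂ) (s : Finset (Fin k)) :
    ((Matrix.detRowAlternating :
        (Fin k → ℂ) [⋀^Fin k]→ₗ[ℂ] ℂ).toMultilinearMap
      (s.piecewise (fun i => (1 : Matrix (Fin k) (Fin k) ℂ) i) (fun i => M i)))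
    = (M.submatrix (fun a : {a // a ∉ s} => a.1) (fun a : {a // a ∉ s} => a.1)).det := by
  classical
  set N : Matrix (Fin k) (Fin k) ℂ :=
    Matrix.of (s.piecewise (fun i => (1 : Matrix (Fin k) (Fin k) ℂ) i) (fun i => M i)) with hN
  change N.det = _
  rw [← Matrix.det_submatrix_equiv_self (Equiv.sumCompl (· ∈ s)) N]
  have hblock : N.submatrix (Equiv.sumCompl (· ∈ s)) (Equiv.sumCompl (· ∈ s)) =
      Matrix.fromBlocks 1 0
        (Matrix.of fun (a : {x // x ∉ s}) (b : {x // x ∈ s}) => M a.1 b.1)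
        (M.submatrix (fun a : {a // a ∉ s} => a.1) (fun a : {a // a ∉ s} => a.1)) := by
    ext ij kl
    cases ij with
    | inl a =>
      cases kl with
      | inl b =>
        simp [N, Finset.piecewise_eq_of_mem _ _ _ a.2, Matrix.one_apply, ← Subtype.ext_iff]
      | inr b =>
        have hab : a.1 ≠ b.1 := fun h => b.2 (h ▸ a.2)
        simp [N, Finset.piecewise_eq_of_mem _ _ _ a.2, Matrix.one_apply, hab]
    | inr a =>
      cases kl with
      | inl b => simp [N, Finset.piecewise_eq_of_notMem _ _ _ a.2]
      | inr b => simp [N, Finset.piecewise_eq_of_notMem _ _ _ a.2]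
  rw [hblock, Matrix.det_fromBlocks_zero₁₂, Matrix.det_one, one_mul]

lemma det_smul_one_add {k : ℕ} (z : ℂ) (M : Matrix (Fin k) (Fin k) ℂ) :
    (z • (1 : Matrix (Fin k) (Fin k) ℂ) + M).det
      = ∑ s : Finset (Fin k), z ^ (k - s.card) *
          (M.submatrix (fun a : {a // a ∈ s} => a.1) (fun a : {a // a ∈ s} => a.1)).det := by
  classical
  have step1 : (z • (1 : Matrix (Fin k) (Fin k) ℂ) + M).det
      = ∑ s : Finset (Fin k), z ^ s.card *
          (M.submatrix (fun a : {a // a ∉ s} => a.1) (fun a : {a // a ∉ s} => a.1)).det := by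
    have hdet : (z • (1 : Matrix (Fin k) (Fin k) ℂ) + M).det
        = Matrix.detRowAlternating
            ((fun i => z • (1 : Matrix (Fin k) (Fin k) ℂ) i) + (fun i => M i)) := rfl
    have key := MultilinearMap.map_add_univ
      (Matrix.detRowAlternating :
        (Fin k → ℂ) [⋀^Fin k]→ₗ[ℂ] ℂ).toMultilinearMap
      (fun i => z • (1 : Matrix (Fin k) (Fin k) ℂ) i) (fun i => M i)
    rw [hdet]
    rw [show ((fun i => z • (1 : Matrix (Fin k) (Fin k) ℂ) i) + (fun i => M i))
      = (fun i => z • (1 : Matrix (Fin k) (Fin k) ℂ) i) + (fun i => M i) from rfl]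
    rw [show (Matrix.detRowAlternating
        ((fun i => z • (1 : Matrix (Fin k) (Fin k) ℂ) i) + (fun i => M i)))
      = ((Matrix.detRowAlternating :
        (Fin k → ℂ) [⋀^Fin k]→ₗ[ℂ] ℂ).toMultilinearMap
        ((fun i => z • (1 : Matrix (Fin k) (Fin k) ℂ) i) + (fun i => M i))) from rfl, key]
    refine Finset.sum_congr rfl fun s _ => ?_
    have hpw : s.piecewise (fun i => z • (1 : Matrix (Fin k) (Fin k) ℂ) i) (fun i => M i)
        = s.piecewise
            (fun i => z • (s.piecewise (fun i => (1 : Matrix (Fin k) (Fin k) ℂ) i)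
                (fun i => M i)) i)
            (s.piecewise (fun i => (1 : Matrix (Fin k) (Fin k) ℂ) i) (fun i => M i)) := by
      funext j
      by_cases hj : j ∈ s <;>
        simp [Finset.piecewise_eq_of_mem _ _ _, Finset.piecewise_eq_of_notMem _ _ _, hj]
    rw [hpw, MultilinearMap.map_piecewise_smul, det_piecewise_one]
    simp [smul_eq_mul]
  rw [step1]
  refine Fintype.sum_bijective (Compl.compl : Finset (Fin k) → Finset (Fin k)) compl_involutive.bijective _ _ fun s => ?_
  have hcs : sᶜ.card = k - s.card := by
    simpa using Finset.card_compl s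
  have hsk : s.card ≤ k := by
    have := Finset.card_le_card (Finset.subset_univ s)
    simpa using this
  have h1 : k - sᶜ.card = s.card := by
    simp only [hcs]; omega
  rw [h1]
  congr 1
  have he : ∀ a : Fin k, a ∉ s ↔ a ∈ sᶜ := fun a => (Finset.mem_compl).symm
  let e : {a // a ∈ sᶜ} ≃ {a // a ∉ s} := Equiv.subtypeEquivRight fun a => (he a).symm
  rw [← Matrix.det_submatrix_equiv_self e
    (M.submatrix (fun a : {a // a ∉ s} => a.1) (fun a : {a // a ∉ s} => a.1))]
  rfl

lemma eval_charpoly {m : ℕ} (N : Matrix (Fin m) (Fin m) ℂ) (z : ℂ) :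
    N.charpoly.eval z = (z • (1 : Matrix (Fin m) (Fin m) ℂ) - N).det := by
  rw [Matrix.charpoly, ← Polynomial.coe_evalRingHom, RingHom.map_det]
  congr 1
  ext i j
  by_cases h : i = j
  · subst h; simp [charmatrix_apply_eq, Matrix.one_apply]
  · simp [charmatrix_apply_ne _ _ _ h, Matrix.one_apply, h]

lemma charpoly_CD_DC {n k : ℕ} (hk : n ≤ k) (Cm : Matrix (Fin n) (Fin k) ℂ)
    (Dm : Matrix (Fin k) (Fin n) ℂ) :
    Polynomial.X ^ (k - n) * (Cm * Dm).charpoly = (Dm * Cm).charpoly := by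
  apply Polynomial.eq_of_infinite_eval_eq
  apply Set.Infinite.mono (s := {z : ℂ | z ≠ 0})
  · intro z hz
    have hz : z ≠ 0 := hz
    simp only [Set.mem_setOf_eq, Polynomial.eval_mul, Polynomial.eval_pow, Polynomial.eval_X]
    rw [eval_charpoly, eval_charpoly]
    have key : ∀ {a b : ℕ} (P : Matrix (Fin a) (Fin b) ℂ) (Q : Matrix (Fin b) (Fin a) ℂ),
        (z • (1 : Matrix (Fin a) (Fin a) ℂ) - P * Q).det
          = z ^ a * (1 + ((-z⁻¹) • P) * Q).det := by
      intro a b P Q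
      have : z • (1 : Matrix (Fin a) (Fin a) ℂ) - P * Q
          = z • (1 + ((-z⁻¹) • P) * Q) := by
        rw [smul_add, Matrix.smul_mul, smul_smul]
        field_simp
        rw [sub_eq_add_neg, neg_one_smul]
      rw [this, Matrix.det_smul]
      simp
    rw [key Cm Dm, key Dm Cm]
    have hc : (1 + ((-z⁻¹) • Cm) * Dm).det = (1 + ((-z⁻¹) • Dm) * Cm).det := by
      rw [Matrix.det_one_add_mul_comm, Matrix.mul_smul, ← Matrix.smul_mul]
    rw [hc, ← mul_assoc, ← pow_add, Nat.sub_add_cancel hk]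
  · exact Set.Finite.infinite_compl (Set.finite_singleton 0)

lemma charpoly_eq_sum_minors {k : ℕ} (N : Matrix (Fin k) (Fin k) ℂ) :
    N.charpoly = ∑ s : Finset (Fin k),
      Polynomial.C ((-1 : ℂ) ^ s.card *
        (N.submatrix (fun a : {a // a ∈ s} => a.1) (fun a : {a // a ∈ s} => a.1)).det)
        * Polynomial.X ^ (k - s.card) := by
  apply Polynomial.funext
  intro z
  rw [eval_charpoly, sub_eq_add_neg, det_smul_one_add]
  rw [Polynomial.eval_finset_sum]
  refine Finset.sum_congr rfl fun s _ => ?_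
  have hneg : ((-N).submatrix (fun a : {a // a ∈ s} => a.1) (fun a : {a // a ∈ s} => a.1))
      = -(N.submatrix (fun a : {a // a ∈ s} => a.1) (fun a : {a // a ∈ s} => a.1)) := rfl
  rw [hneg, Matrix.det_neg]
  simp [Fintype.card_coe]
  ring

lemma charpoly_coeff_minors {k i : ℕ} (hik : i ≤ k) (N : Matrix (Fin k) (Fin k) ℂ) :
    N.charpoly.coeff (k - i) = (-1 : ℂ) ^ i *
      ∑ s ∈ Finset.powersetCard i (Finset.univ : Finset (Fin k)),
        (N.submatrix (fun a : {a // a ∈ s} => a.1) (fun a : {a // a ∈ s} => a.1)).det := by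
  classical
  rw [charpoly_eq_sum_minors, Polynomial.finset_sum_coeff]
  have : ∀ s : Finset (Fin k),
      (Polynomial.C ((-1 : ℂ) ^ s.card *
        (N.submatrix (fun a : {a // a ∈ s} => a.1) (fun a : {a // a ∈ s} => a.1)).det)
        * Polynomial.X ^ (k - s.card)).coeff (k - i)
      = if s.card = i then ((-1 : ℂ) ^ i *
        (N.submatrix (fun a : {a // a ∈ s} => a.1) (fun a : {a // a ∈ s} => a.1)).det) else 0 := by
    intro s
    rw [Polynomial.coeff_C_mul_X_pow]
    have hsc : s.card ≤ k := by
      have := Finset.card_le_card (Finset.subset_univ s); simpa using this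
    by_cases h : s.card = i
    · rw [if_pos (by omega), if_pos h, h]
    · rw [if_neg (by omega), if_neg h]
  rw [Finset.sum_congr rfl fun s _ => this s, Finset.sum_ite, Finset.sum_const_zero, add_zero,
    Finset.mul_sum]
  refine (Finset.sum_congr ?_ fun s _ => rfl)
  ext t
  simp [Finset.mem_powersetCard_univ]

/-- The `i`-th elementary symmetric polynomial of the eigenvalues of
`ρ = ∑_i p_i |ψ_i⟩⟨ψ_i|` equals `∑_{u_1<…<u_i} p_{u_1}⋯p_{u_i} det A_{u_1,…,u_i}`,
where `A` is the matrix of inner products `⟨ψ_i, ψ_j⟩`. -/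
theorem stmt_6 (k n : ℕ) (hn : 1 ≤ n) (hk : n ≤ k)
    (ψ : Fin k → Fin n → ℂ) (p : Fin k → ℝ) (hp : ∀ i, 0 < p i)
    (ρ : Matrix (Fin n) (Fin n) ℂ)
    (hρ : ρ = ∑ i, (p i : ℂ) • Matrix.of (fun a b => ψ i a * star (ψ i b)))
    (x : Fin n → ℝ)
    (hx : ρ.charpoly = ∏ j, (Polynomial.X - Polynomial.C (x j : ℂ)))
    (A : Matrix (Fin k) (Fin k) ℂ)
    (hA : ∀ i j, A i j = ∑ a, star (ψ i a) * ψ j a)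
    (i : ℕ) (hi1 : 1 ≤ i) (hin : i ≤ n) :
    (esymm n i x : ℂ) =
      ∑ s ∈ Finset.powersetCard i (Finset.univ : Finset (Fin k)),
        (∏ u ∈ s, (p u : ℂ)) *
          (A.submatrix (fun a : {a // a ∈ s} => a.1) (fun a : {a // a ∈ s} => a.1)).det := by
  classical
  set Cm : Matrix (Fin n) (Fin k) ℂ := Matrix.of fun a u => (p u : ℂ) * ψ u a with hCm
  set Dm : Matrix (Fin k) (Fin n) ℂ := Matrix.of fun u b => star (ψ u b) with hDm
  have hCD : Cm * Dm = ρ := by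
    ext a b
    rw [hρ]
    simp only [Matrix.mul_apply, Matrix.sum_apply, Matrix.smul_apply, Matrix.of_apply,
      smul_eq_mul, hCm, hDm]
    exact Finset.sum_congr rfl fun u _ => by ring
  have hDC : Dm * Cm = Matrix.of fun u v => (p v : ℂ) * A u v := by
    ext u v
    simp only [Matrix.mul_apply, Matrix.of_apply, hCm, hDm, hA, Finset.mul_sum]
    exact Finset.sum_congr rfl fun b _ => by ring
  have key := charpoly_CD_DC hk Cm Dm
  rw [hCD] at key
  -- take coefficient (k - i) on both sides
  have hcoeff := congrArg (fun q : Polynomial ℂ => q.coeff (k - i)) key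
  beta_reduce at hcoeff
  -- LHS coefficient
  have hki : k - i = (n - i) + (k - n) := by omega
  rw [hki, Polynomial.coeff_X_pow_mul, hx] at hcoeff
  have hprod : (∏ j, (Polynomial.X - Polynomial.C (x j : ℂ)))
      = ((Finset.univ.val.map fun j => (x j : ℂ)).map fun t =>
          Polynomial.X - Polynomial.C t).prod := by
    rw [Multiset.map_map]; rfl
  have hcard : Multiset.card (Finset.univ.val.map fun j : Fin n => (x j : ℂ)) = n := by
    simp
  have hvieta := Multiset.prod_X_sub_C_coeff
    (Finset.univ.val.map fun j : Fin n => (x j : ℂ)) (k := n - i) (by omega)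
  rw [hcard] at hvieta
  have hni : n - (n - i) = i := by omega
  rw [hni] at hvieta
  rw [hprod, hvieta, Finset.esymm_map_val] at hcoeff
  -- RHS coefficient
  rw [← hki, charpoly_coeff_minors (le_trans hin hk)] at hcoeff
  -- identify minors of Dm * Cm
  have hminor : ∀ s ∈ Finset.powersetCard i (Finset.univ : Finset (Fin k)),
      ((Matrix.of fun u v => (p v : ℂ) * A u v).submatrix
          (fun a : {a // a ∈ s} => a.1) (fun a : {a // a ∈ s} => a.1)).det
        = (∏ u ∈ s, (p u : ℂ)) *
          (A.submatrix (fun a : {a // a ∈ s} => a.1) (fun a : {a // a ∈ s} => a.1)).det := by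
    intro s _
    have : ((Matrix.of fun u v => (p v : ℂ) * A u v).submatrix
          (fun a : {a // a ∈ s} => a.1) (fun a : {a // a ∈ s} => a.1))
        = Matrix.of fun u v : {a // a ∈ s} => (p v.1 : ℂ) *
            (A.submatrix (fun a : {a // a ∈ s} => a.1) (fun a : {a // a ∈ s} => a.1)) u v := rfl
    rw [this, Matrix.det_mul_row]
    congr 1
    exact Finset.prod_coe_sort s fun u => (p u : ℂ)
  rw [hDC] at hcoeff
  rw [Finset.sum_congr rfl hminor] at hcoeff
  -- conclude
  have hcast : (esymm n i x : ℂ)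
      = ∑ t ∈ Finset.powersetCard i (Finset.univ : Finset (Fin n)), ∏ u ∈ t, (x u : ℂ) := by
    rw [esymm]
    push_cast
    rfl
  rw [hcast]
  have hne : ((-1 : ℂ) ^ i) ≠ 0 := pow_ne_zero _ (by norm_num)
  exact mul_left_cancel₀ hne hcoeff
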